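/- Let $Q = (q_n)$ be a sequence of integers with $q_n \geq 2$ and $q_n \to \infty$, and let $x \in [0,1)$ be $Q$-distribution normal, i.e., the sequence $T_{Q,n}(x) = (q_1 \cdots q_n) x \bmod 1$ is uniformly distributed mod 1. If $y \in [0,1)$ satisfies $|T_{Q,n-1}(x) - T_{Q,n-1}(y)| \leq 1/q_n$ for all $n \geq 1$, then $y$ is also $Q$-distribution normal. -/

import Mathlib

open Filter
open scoped Classical

/-- A sequence of reals is uniformly distributed mod 1. -/
def UDMod1 (u : ℕ → ℝ) : Prop :=
  ∀ a b : ℝ, 0 ≤ a → a < b → b ≤ 1 →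
    Tendsto (fun N : ℕ =>
        (((Finset.range N).filter
          (fun n => a ≤ Int.fract (u n) ∧ Int.fract (u n) < b)).card : ℝ) / N)
      atTop (nhds (b - a))

lemma card_filter_le_aux (P Q : ℕ → Prop) [DecidablePred P] [DecidablePred Q] (N0 N : ℕ)
    (h : ∀ n, N0 ≤ n → P n → Q n) :
    ((Finset.range N).filter P).card ≤ ((Finset.range N).filter Q).card + N0 := by
  have hsub : (Finset.range N).filter P ⊆ (Finset.range N).filter Q ∪ Finset.range N0 := by
    intro n hn
    simp only [Finset.mem_filter, Finset.mem_range] at hn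
    rcases le_or_gt N0 n with h1 | h1
    · exact Finset.mem_union_left _ (Finset.mem_filter.2 ⟨Finset.mem_range.2 hn.1, h n h1 hn.2⟩)
    · exact Finset.mem_union_right _ (Finset.mem_range.2 h1)
  calc ((Finset.range N).filter P).card
      ≤ ((Finset.range N).filter Q ∪ Finset.range N0).card := Finset.card_le_card hsub
    _ ≤ ((Finset.range N).filter Q).card + (Finset.range N0).card := Finset.card_union_le _ _
    _ = ((Finset.range N).filter Q).card + N0 := by rw [Finset.card_range]

lemma key_lemma (U V : ℕ → ℝ)
    (hU0 : ∀ n, 0 ≤ U n) (hU1 : ∀ n, U n < 1)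
    (hV0 : ∀ n, 0 ≤ V n) (hV1 : ∀ n, V n < 1)
    (hdiff : Tendsto (fun n => U n - V n) atTop (nhds 0))
    (hud : ∀ a b : ℝ, 0 ≤ a → a < b → b ≤ 1 →
      Tendsto (fun N : ℕ =>
        (((Finset.range N).filter (fun n => a ≤ U n ∧ U n < b)).card : ℝ) / N)
        atTop (nhds (b - a))) :
    ∀ a b : ℝ, 0 ≤ a → a < b → b ≤ 1 →
      Tendsto (fun N : ℕ =>
        (((Finset.range N).filter (fun n => a ≤ V n ∧ V n < b)).card : ℝ) / N)
        atTop (nhds (b - a)) := by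
  intro a b ha hab hb
  rw [Metric.tendsto_atTop]
  intro ε hε
  set δ := ε / 5 with hδdef
  have hδ : 0 < δ := by positivity
  obtain ⟨N0, hN0⟩ := Metric.tendsto_atTop.1 hdiff δ hδ
  simp only [Real.dist_eq, sub_zero] at hN0
  -- upper interval
  set A := max (a - δ) 0 with hAdef
  set B := min (b + δ) 1 with hBdef
  have hA0 : 0 ≤ A := le_max_right _ _
  have hAa : A ≤ a := max_le (by linarith) ha
  have hbB : b ≤ B := le_min (by linarith) hb
  have hAB : A < B := lt_of_le_of_lt hAa (lt_of_lt_of_le hab hbB)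
  have hB1 : B ≤ 1 := min_le_right _ _
  have hBA : B - A ≤ b - a + 2 * δ := by
    have h1 : a - δ ≤ A := le_max_left _ _
    have h2 : B ≤ b + δ := min_le_left _ _
    linarith
  obtain ⟨N1, hN1⟩ := Metric.tendsto_atTop.1 (hud A B hA0 hAB hB1) δ hδ
  obtain ⟨N2, hN2⟩ := Metric.tendsto_atTop.1
    (tendsto_const_div_atTop_nhds_zero_nat (N0 : ℝ)) δ hδ
  -- common upper bound argument
  have upper : ∀ N : ℕ, 0 < N → N1 ≤ N → N2 ≤ N →
      (((Finset.range N).filter (fun n => a ≤ V n ∧ V n < b)).card : ℝ) / N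
        < b - a + 4 * δ := by
    intro N hNpos hN1' hN2'
    have himp : ∀ n, N0 ≤ n → (a ≤ V n ∧ V n < b) → (A ≤ U n ∧ U n < B) := by
      intro n hn ⟨h1, h2⟩
      have habs := hN0 n hn
      have habs' := abs_lt.1 habs
      constructor
      · exact max_le (by linarith) (hU0 n)
      · exact lt_min (by linarith) (hU1 n)
    have hcard := card_filter_le_aux _ _ N0 N himp
    have hcard' : (((Finset.range N).filter (fun n => a ≤ V n ∧ V n < b)).card : ℝ)
        ≤ (((Finset.range N).filter (fun n => A ≤ U n ∧ U n < B)).card : ℝ) + N0 := by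
      exact_mod_cast hcard
    have hNposR : (0:ℝ) < N := by exact_mod_cast hNpos
    have hdiv : (((Finset.range N).filter (fun n => a ≤ V n ∧ V n < b)).card : ℝ) / N
        ≤ (((Finset.range N).filter (fun n => A ≤ U n ∧ U n < B)).card : ℝ) / N
          + (N0 : ℝ) / N := by
      rw [← add_div]
      exact div_le_div_of_nonneg_right hcard' hNposR.le
    have hg := hN1 N hN1'
    rw [Real.dist_eq] at hg
    have hg' := (abs_lt.1 hg).2
    have hn0 := hN2 N hN2'
    rw [Real.dist_eq, sub_zero] at hn0
    have hn0' := (abs_lt.1 hn0).2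
    calc (((Finset.range N).filter (fun n => a ≤ V n ∧ V n < b)).card : ℝ) / N
        ≤ _ + (N0:ℝ)/N := hdiv
      _ < ((B - A) + δ) + δ := by linarith
      _ ≤ b - a + 4 * δ := by linarith
  by_cases hcase : a + δ < b - δ
  · -- lower interval
    obtain ⟨N3, hN3⟩ := Metric.tendsto_atTop.1
      (hud (a + δ) (b - δ) (by linarith) hcase (by linarith)) δ hδ
    refine ⟨max (max N1 N2) (max N3 1), fun N hN => ?_⟩
    have hN1' : N1 ≤ N := le_trans (le_trans (le_max_left _ _) (le_max_left _ _)) hN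
    have hN2' : N2 ≤ N := le_trans (le_trans (le_max_right _ _) (le_max_left _ _)) hN
    have hN3' : N3 ≤ N := le_trans (le_trans (le_max_left _ _) (le_max_right _ _)) hN
    have hNpos : 0 < N := le_trans (le_trans (le_max_right _ _) (le_max_right _ _)) hN
    have hup := upper N hNpos hN1' hN2'
    -- lower bound
    have himp : ∀ n, N0 ≤ n → (a + δ ≤ U n ∧ U n < b - δ) → (a ≤ V n ∧ V n < b) := by
      intro n hn ⟨h1, h2⟩
      have habs := hN0 n hn
      have habs' := abs_lt.1 habs
      constructor
      · linarith
      · linarith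
    have hcard := card_filter_le_aux _ _ N0 N himp
    have hcard' : (((Finset.range N).filter (fun n => a + δ ≤ U n ∧ U n < b - δ)).card : ℝ)
        ≤ (((Finset.range N).filter (fun n => a ≤ V n ∧ V n < b)).card : ℝ) + N0 := by
      exact_mod_cast hcard
    have hNposR : (0:ℝ) < N := by exact_mod_cast hNpos
    have hdiv : (((Finset.range N).filter (fun n => a + δ ≤ U n ∧ U n < b - δ)).card : ℝ) / N
        ≤ (((Finset.range N).filter (fun n => a ≤ V n ∧ V n < b)).card : ℝ) / N
          + (N0 : ℝ) / N := by
      rw [← add_div]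
      exact div_le_div_of_nonneg_right hcard' hNposR.le
    have hg := hN3 N hN3'
    rw [Real.dist_eq] at hg
    have hg' := (abs_lt.1 hg).1
    have hn0 := hN2 N hN2'
    rw [Real.dist_eq, sub_zero] at hn0
    have hn0' := (abs_lt.1 hn0).2
    have hlow : b - a - 4 * δ
        < (((Finset.range N).filter (fun n => a ≤ V n ∧ V n < b)).card : ℝ) / N := by
      have : ((b - δ) - (a + δ)) - δ
          < (((Finset.range N).filter (fun n => a + δ ≤ U n ∧ U n < b - δ)).card : ℝ) / N := by
        linarith
      linarith
    rw [Real.dist_eq, abs_lt]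
    constructor <;> [linarith; linarith]
  · -- short interval: b - a ≤ 2δ
    push_neg at hcase
    refine ⟨max (max N1 N2) 1, fun N hN => ?_⟩
    have hN1' : N1 ≤ N := le_trans (le_trans (le_max_left _ _) (le_max_left _ _)) hN
    have hN2' : N2 ≤ N := le_trans (le_trans (le_max_right _ _) (le_max_left _ _)) hN
    have hNpos : 0 < N := le_trans (le_max_right _ _) hN
    have hup := upper N hNpos hN1' hN2'
    have hnn : (0:ℝ) ≤ (((Finset.range N).filter (fun n => a ≤ V n ∧ V n < b)).card : ℝ) / N := by
      positivity
    rw [Real.dist_eq, abs_lt]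
    constructor <;> [linarith; linarith]

theorem stmt14 (q : ℕ → ℕ) (hq : ∀ n, 2 ≤ q n)
    (hqinf : Tendsto q atTop atTop)
    (x y : ℝ) (hx : x ∈ Set.Ico (0 : ℝ) 1) (hy : y ∈ Set.Ico (0 : ℝ) 1)
    (hxud : UDMod1 (fun n => (∏ i ∈ Finset.range n, (q i : ℝ)) * x))
    (hclose : ∀ n : ℕ,
      |Int.fract ((∏ i ∈ Finset.range n, (q i : ℝ)) * x) -
          Int.fract ((∏ i ∈ Finset.range n, (q i : ℝ)) * y)| ≤ 1 / q n) :
    UDMod1 (fun n => (∏ i ∈ Finset.range n, (q i : ℝ)) * y) := by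
  have hq' : Tendsto (fun n => (q n : ℝ)) atTop atTop :=
    tendsto_natCast_atTop_atTop.comp hqinf
  have h1q : Tendsto (fun n => 1 / (q n : ℝ)) atTop (nhds 0) := by
    simpa [one_div, Pi.inv_def] using hq'.inv_tendsto_atTop
  have hdiff : Tendsto (fun n =>
      Int.fract ((∏ i ∈ Finset.range n, (q i : ℝ)) * x) -
        Int.fract ((∏ i ∈ Finset.range n, (q i : ℝ)) * y)) atTop (nhds 0) := by
    apply squeeze_zero_norm (fun n => ?_) h1q
    simpa [Real.norm_eq_abs] using hclose n
  exact key_lemma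
    (fun n => Int.fract ((∏ i ∈ Finset.range n, (q i : ℝ)) * x))
    (fun n => Int.fract ((∏ i ∈ Finset.range n, (q i : ℝ)) * y))
    (fun n => Int.fract_nonneg _) (fun n => Int.fract_lt_one _)
    (fun n => Int.fract_nonneg _) (fun n => Int.fract_lt_one _)
    hdiff hxud
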